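/- For every τ ∈ ℂ with Im τ > 0 and every z ∈ ℂ, the theta addition formula holds: θ[0,0](τ, z)² = θ[0,0](2τ, 0)·θ[0,0](2τ, 2z) + θ[1/2, 0](2τ, 0)·θ[1/2, 0](2τ, 2z). Explicitly, (Σ_{m∈ℤ} exp(πiτm² + 2πimz))² = (Σ_{m∈ℤ} exp(2πiτm²))·(Σ_{m∈ℤ} exp(2πiτm² + 4πimz)) + (Σ_{m∈ℤ} exp(2πiτ(m + 1/2)²))·(Σ_{m∈ℤ} exp(2πiτ(m + 1/2)² + 4πi(m + 1/2)z)). (This identity verifies that the mirror functor Φ from line bundles on E_τ to the Fukaya category of E^τ respects the composition m₂(e₁, e₁) = θ[0,0](2τ,0)e₂ + θ[1/2,0](2τ,0)e₃.) -/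

import Mathlib

/-- The theta function with real characteristics `c′, c″`:
`θ[c′, c″](τ, z) = Σ_{m∈ℤ} exp(2πi(τ(m + c′)²/2 + (m + c′)(z + c″)))`. -/
noncomputable def theta (c' c'' : ℝ) (τ z : ℂ) : ℂ :=
  ∑' m : ℤ,
    Complex.exp (2 * Real.pi * Complex.I *
      (τ * ((m : ℂ) + (c' : ℂ)) ^ 2 / 2 + ((m : ℂ) + (c' : ℂ)) * (z + (c'' : ℂ))))

open Complex Real

/-- The summand of `theta c 0 τ z`. -/
noncomputable def thTerm (c : ℝ) (τ z : ℂ) (m : ℤ) : ℂ :=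
  Complex.exp (2 * Real.pi * Complex.I *
    (τ * ((m : ℂ) + (c : ℂ)) ^ 2 / 2 + ((m : ℂ) + (c : ℂ)) * (z + ((0 : ℝ) : ℂ))))

lemma thTerm_eq_jacobi (c : ℝ) (τ z : ℂ) (m : ℤ) :
    thTerm c τ z m =
      Complex.exp (Real.pi * Complex.I * τ * c ^ 2 + 2 * Real.pi * Complex.I * c * z) *
        jacobiTheta₂_term m (τ * c + z) τ := by
  rw [thTerm, jacobiTheta₂_term, ← Complex.exp_add]
  congr 1
  push_cast
  ring

lemma summable_norm_thTerm (c : ℝ) (τ z : ℂ) (hτ : 0 < τ.im) :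
    Summable fun m : ℤ => ‖thTerm c τ z m‖ := by
  have h : Summable fun n : ℤ => ‖jacobiTheta₂_term n (τ * c + z) τ‖ := by
    apply (summable_pow_mul_jacobiTheta₂_term_bound |(τ * c + z).im| hτ 0).of_nonneg_of_le
      (fun _ => norm_nonneg _)
    intro n
    simpa using norm_jacobiTheta₂_term_le hτ (le_refl |(τ * c + z).im|) (le_refl τ.im) n
  simp only [thTerm_eq_jacobi, norm_mul]
  exact h.mul_left _

/-- Reindexing of the even-diagonal sublattice. -/
noncomputable def eEven : ℤ × ℤ ≃ {p : ℤ × ℤ // Even (p.1 + p.2)} :=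
  Equiv.ofBijective
    (fun p => ⟨(p.2 + p.1, p.2 - p.1), ⟨p.2, by ring⟩⟩)
    (by
      constructor
      · intro p q h
        simp only [Subtype.mk.injEq, Subtype.ext_iff, Prod.mk.injEq] at h
        obtain ⟨h1, h2⟩ := h
        exact Prod.ext (by omega) (by omega)
      · rintro ⟨⟨m, n⟩, ⟨k, hk⟩⟩
        refine ⟨(m - k, k), Subtype.ext ?_⟩
        simp only [Prod.mk.injEq]
        constructor <;> omega)

/-- Reindexing of the odd-diagonal sublattice. -/
noncomputable def eOdd : ℤ × ℤ ≃ {p : ℤ × ℤ // ¬ Even (p.1 + p.2)} :=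
  Equiv.ofBijective
    (fun p => ⟨(p.2 + p.1 + 1, p.2 - p.1), by
      rw [Int.even_iff]
      omega⟩)
    (by
      constructor
      · intro p q h
        simp only [Subtype.mk.injEq, Prod.mk.injEq] at h
        obtain ⟨h1, h2⟩ := h
        exact Prod.ext (by omega) (by omega)
      · rintro ⟨⟨m, n⟩, hmn⟩
        rw [Int.even_iff] at hmn
        refine ⟨(m - (m + n + 1) / 2, (m + n - 1) / 2), Subtype.ext ?_⟩
        simp only [Prod.mk.injEq]
        constructor <;> omega)

/-- The theta addition formula
`θ[0,0](τ,z)² = θ[0,0](2τ,0)·θ[0,0](2τ,2z) + θ[1/2,0](2τ,0)·θ[1/2,0](2τ,2z)`,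
verifying that the mirror functor respects the composition
`m₂(e₁,e₁) = θ[0,0](2τ,0)e₂ + θ[1/2,0](2τ,0)e₃`. -/
theorem theta_addition_formula (τ z : ℂ) (hτ : 0 < τ.im) :
    theta 0 0 τ z ^ 2 =
      theta 0 0 (2 * τ) 0 * theta 0 0 (2 * τ) (2 * z) +
        theta (1 / 2) 0 (2 * τ) 0 * theta (1 / 2) 0 (2 * τ) (2 * z) := by
  have h2τ : 0 < (2 * τ).im := by
    rw [Complex.mul_im]
    simp
    linarith
  have hs0 : Summable fun m : ℤ => ‖thTerm 0 τ z m‖ := summable_norm_thTerm 0 τ z hτ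
  have hsA : Summable fun m : ℤ => ‖thTerm 0 (2 * τ) 0 m‖ :=
    summable_norm_thTerm 0 (2 * τ) 0 h2τ
  have hsB : Summable fun m : ℤ => ‖thTerm 0 (2 * τ) (2 * z) m‖ :=
    summable_norm_thTerm 0 (2 * τ) (2 * z) h2τ
  have hsC : Summable fun m : ℤ => ‖thTerm (1 / 2) (2 * τ) 0 m‖ :=
    summable_norm_thTerm (1 / 2) (2 * τ) 0 h2τ
  have hsD : Summable fun m : ℤ => ‖thTerm (1 / 2) (2 * τ) (2 * z) m‖ :=
    summable_norm_thTerm (1 / 2) (2 * τ) (2 * z) h2τ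
  have h1 : theta 0 0 τ z ^ 2 = ∑' p : ℤ × ℤ, thTerm 0 τ z p.1 * thTerm 0 τ z p.2 := by
    rw [sq]
    exact tsum_mul_tsum_of_summable_norm hs0 hs0
  have h2 : theta 0 0 (2 * τ) 0 * theta 0 0 (2 * τ) (2 * z) =
      ∑' p : ℤ × ℤ, thTerm 0 (2 * τ) 0 p.1 * thTerm 0 (2 * τ) (2 * z) p.2 :=
    tsum_mul_tsum_of_summable_norm hsA hsB
  have h3 : theta (1 / 2) 0 (2 * τ) 0 * theta (1 / 2) 0 (2 * τ) (2 * z) =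
      ∑' p : ℤ × ℤ, thTerm (1 / 2) (2 * τ) 0 p.1 * thTerm (1 / 2) (2 * τ) (2 * z) p.2 :=
    tsum_mul_tsum_of_summable_norm hsC hsD
  set F : ℤ × ℤ → ℂ := fun p => thTerm 0 τ z p.1 * thTerm 0 τ z p.2 with hFdef
  have hF : Summable F := summable_mul_of_summable_norm hs0 hs0
  have hsplit := hF.tsum_subtype_add_tsum_subtype_compl {p : ℤ × ℤ | Even (p.1 + p.2)}
  have hEven : (∑' x : {p : ℤ × ℤ | Even (p.1 + p.2)}, F x) =
      ∑' p : ℤ × ℤ, thTerm 0 (2 * τ) 0 p.1 * thTerm 0 (2 * τ) (2 * z) p.2 := by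
    refine Eq.trans (eEven.tsum_eq (fun s : {p : ℤ × ℤ // Even (p.1 + p.2)} => F s.val)).symm
      (tsum_congr fun p => ?_)
    show thTerm 0 τ z (p.2 + p.1) * thTerm 0 τ z (p.2 - p.1) = _
    simp only [thTerm]
    rw [← Complex.exp_add, ← Complex.exp_add]
    congr 1
    push_cast
    ring
  have hOdd : (∑' x : ↥{p : ℤ × ℤ | Even (p.1 + p.2)}ᶜ, F x) =
      ∑' p : ℤ × ℤ, thTerm (1 / 2) (2 * τ) 0 p.1 * thTerm (1 / 2) (2 * τ) (2 * z) p.2 := by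
    refine Eq.trans (eOdd.tsum_eq (fun s : {p : ℤ × ℤ // ¬ Even (p.1 + p.2)} => F s.val)).symm
      (tsum_congr fun p => ?_)
    show thTerm 0 τ z (p.2 + p.1 + 1) * thTerm 0 τ z (p.2 - p.1) = _
    simp only [thTerm]
    rw [← Complex.exp_add, ← Complex.exp_add]
    congr 1
    push_cast
    ring
  rw [h1, h2, h3, ← hsplit, hEven, hOdd]
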